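/- Let (W, R, 𝒫) be a descriptive S4-frame such that: (i) the only members of 𝒫 that are simultaneously R-upsets and R-downsets are ∅ and W (connectedness); and (ii) for every A ∈ 𝒫, R⁻¹({w : R(w) ⊆ A}) ⊆ {w : R(w) ⊆ R⁻¹(A)} (validity of the S4.2 axiom ◇□p → □◇p). Then any two R-maximal points of W are R-related; that is, W has at most one maximal cluster. (Here a point w is R-maximal if w R v implies v R w, and R(w) = {v : w R v}.) -/

import Mathlib

open Set

/-- Auxiliary: for two families each containing `univ` and closed under binary lower bounds,
any finite subfamily of their union contains an `A ∩ B` lower bound. -/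
lemma aux_finite17 {W : Type*} (F1 F2 : Set (Set W))
    (h1 : ∀ A ∈ F1, ∀ B ∈ F1, ∃ C ∈ F1, C ⊆ A ∩ B)
    (h2 : ∀ A ∈ F2, ∀ B ∈ F2, ∃ C ∈ F2, C ⊆ A ∩ B)
    (hu1 : (univ : Set W) ∈ F1) (hu2 : (univ : Set W) ∈ F2) :
    ∀ G : Set (Set W), G.Finite → G ⊆ F1 ∪ F2 →
      ∃ A ∈ F1, ∃ B ∈ F2, A ∩ B ⊆ ⋂₀ G := by
  intro G hG
  refine Set.Finite.induction_on
    (motive := fun G _ => G ⊆ F1 ∪ F2 → ∃ A ∈ F1, ∃ B ∈ F2, A ∩ B ⊆ ⋂₀ G) G hG ?_ ?_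
  · intro _; exact ⟨univ, hu1, univ, hu2, by simp⟩
  · intro g G _ hGfin ih hsub
    obtain ⟨A, hA, B, hB, hAB⟩ := ih (fun s hs => hsub (Set.mem_insert_of_mem _ hs))
    rcases hsub (Set.mem_insert _ _) with hin | hin
    · obtain ⟨C, hC, hCsub⟩ := h1 _ hin A hA
      refine ⟨C, hC, B, hB, ?_⟩
      rw [Set.sInter_insert]
      intro w hw
      exact ⟨(hCsub hw.1).1, hAB ⟨(hCsub hw.1).2, hw.2⟩⟩
    · obtain ⟨C, hC, hCsub⟩ := h2 _ hin B hB
      refine ⟨A, hA, C, hC, ?_⟩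
      rw [Set.sInter_insert]
      intro w hw
      exact ⟨(hCsub hw.2).1, hAB ⟨hw.1, (hCsub hw.2).2⟩⟩

/-- Let `(W, R, 𝒫)` be a descriptive S4-frame such that (i) the only members
of `𝒫` that are simultaneously `R`-upsets and `R`-downsets are `∅` and `W` (connectedness),
and (ii) for every `A ∈ 𝒫`, `R⁻¹({w : R(w) ⊆ A}) ⊆ {w : R(w) ⊆ R⁻¹(A)}` (validity of the
S4.2 axiom `◇□p → □◇p`). Then any two `R`-maximal points of `W` are `R`-related, i.e. `W` has
at most one maximal cluster. -/
theorem statement17 {W : Type*} (R : W → W → Prop)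
    (hrefl : ∀ w, R w w) (htrans : ∀ u v w, R u v → R v w → R u w)
    (P : Set (Set W))
    (hempty : (∅ : Set W) ∈ P) (huniv : (univ : Set W) ∈ P)
    (hunion : ∀ A ∈ P, ∀ B ∈ P, A ∪ B ∈ P)
    (hcompl : ∀ A ∈ P, Aᶜ ∈ P)
    (hRinv : ∀ A ∈ P, {w : W | ∃ v ∈ A, R w v} ∈ P)
    (hdiff : ∀ x y : W, x ≠ y → ∃ A ∈ P, x ∈ A ∧ y ∉ A)
    (hcompact : ∀ F ⊆ P, (∀ G ⊆ F, G.Finite → (⋂₀ G).Nonempty) → (⋂₀ F).Nonempty)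
    (htight : ∀ w v : W, ¬ R w v → ∃ A ∈ P, v ∈ A ∧ w ∉ {x : W | ∃ u ∈ A, R x u})
    (hconn : ∀ A ∈ P, (∀ w ∈ A, ∀ v, R w v → v ∈ A) →
      (∀ v ∈ A, ∀ w, R w v → w ∈ A) → A = ∅ ∨ A = univ)
    (hS42 : ∀ A ∈ P, {w : W | ∃ v, R w v ∧ ∀ u, R v u → u ∈ A} ⊆
      {w : W | ∀ v, R w v → ∃ u ∈ A, R v u}) :
    ∀ x y : W, (∀ v, R x v → R v x) → (∀ v, R y v → R v y) → R x y := by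
  intro x y hx hy
  -- 𝒫 is closed under finite intersections
  have hinter : ∀ A ∈ P, ∀ B ∈ P, A ∩ B ∈ P := by
    intro A hA B hB
    have h := hcompl _ (hunion _ (hcompl A hA) _ (hcompl B hB))
    simpa [Set.compl_union] using h
  -- 𝒫 is closed under □
  have hbox : ∀ A ∈ P, {w : W | ∀ v, R w v → v ∈ A} ∈ P := by
    intro A hA
    have h := hcompl _ (hRinv _ (hcompl A hA))
    have heq : {w : W | ∃ v ∈ Aᶜ, R w v}ᶜ = {w : W | ∀ v, R w v → v ∈ A} := by
      ext w
      simp only [Set.mem_compl_iff, Set.mem_setOf_eq, not_exists]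
      constructor
      · intro h v hv
        by_contra hc
        exact h v ⟨hc, hv⟩
      · intro h v ⟨hvc, hv⟩
        exact hvc (h v hv)
    rwa [heq] at h
  -- Directedness: d-persistence of the S4.2 axiom
  have directed : ∀ w v1 v2, R w v1 → R w v2 → ∃ u, R v1 u ∧ R v2 u := by
    intro w v1 v2 h1 h2
    set F1 : Set (Set W) := {A | A ∈ P ∧ ∀ t, R v1 t → t ∈ A} with hF1def
    set F2 : Set (Set W) := {A | A ∈ P ∧ ∀ t, R v2 t → t ∈ A} with hF2def
    have key : ∀ A ∈ F1, ∀ B ∈ F2, (A ∩ B).Nonempty := by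
      intro A hA B hB
      have hw : w ∈ {w : W | ∃ v, R w v ∧ ∀ u, R v u → u ∈ A} := ⟨v1, h1, hA.2⟩
      obtain ⟨u, huA, hu⟩ := hS42 A hA.1 hw v2 h2
      exact ⟨u, huA, hB.2 u hu⟩
    have hfip : ∀ G ⊆ F1 ∪ F2, G.Finite → (⋂₀ G).Nonempty := by
      intro G hGsub hGfin
      obtain ⟨A, hA, B, hB, hsub⟩ := aux_finite17 F1 F2
        (fun A hA B hB => ⟨A ∩ B, ⟨hinter _ hA.1 _ hB.1,
          fun t ht => ⟨hA.2 t ht, hB.2 t ht⟩⟩, Set.Subset.rfl⟩)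
        (fun A hA B hB => ⟨A ∩ B, ⟨hinter _ hA.1 _ hB.1,
          fun t ht => ⟨hA.2 t ht, hB.2 t ht⟩⟩, Set.Subset.rfl⟩)
        ⟨huniv, fun _ _ => trivial⟩ ⟨huniv, fun _ _ => trivial⟩ G hGfin hGsub
      obtain ⟨u, hu⟩ := key A hA B hB
      exact ⟨u, hsub hu⟩
    obtain ⟨u, hu⟩ := hcompact (F1 ∪ F2)
      (by rintro A (hA | hA) <;> exact hA.1) hfip
    refine ⟨u, ?_, ?_⟩
    · by_contra hc
      obtain ⟨A', hA', huA', hv1n⟩ := htight v1 u hc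
      have hmem : A'ᶜ ∈ F1 :=
        ⟨hcompl _ hA', fun t ht hmem => hv1n ⟨t, hmem, ht⟩⟩
      exact hu A'ᶜ (Set.mem_union_left _ hmem) huA'
    · by_contra hc
      obtain ⟨A', hA', huA', hv2n⟩ := htight v2 u hc
      have hmem : A'ᶜ ∈ F2 :=
        ⟨hcompl _ hA', fun t ht hmem => hv2n ⟨t, hmem, ht⟩⟩
      exact hu A'ᶜ (Set.mem_union_right _ hmem) huA'
  -- If z sees every admissible upset containing R(w), then z and w have a common successor
  have seeclass : ∀ z w : W,
      (∀ C, C ∈ P → (∀ a ∈ C, ∀ b, R a b → b ∈ C) → (∀ t, R w t → t ∈ C) →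
        ∃ v ∈ C, R z v) → ∃ u, R z u ∧ R w u := by
    intro z w hz
    set F1 : Set (Set W) :=
      {C | C ∈ P ∧ (∀ a ∈ C, ∀ b, R a b → b ∈ C) ∧ ∀ t, R w t → t ∈ C} with hF1def
    set F2 : Set (Set W) := {B | B ∈ P ∧ ∀ t, R z t → t ∈ B} with hF2def
    have key : ∀ A ∈ F1, ∀ B ∈ F2, (A ∩ B).Nonempty := by
      intro A hA B hB
      obtain ⟨v, hvA, hzv⟩ := hz A hA.1 hA.2.1 hA.2.2
      exact ⟨v, hvA, hB.2 v hzv⟩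
    have hfip : ∀ G ⊆ F1 ∪ F2, G.Finite → (⋂₀ G).Nonempty := by
      intro G hGsub hGfin
      obtain ⟨A, hA, B, hB, hsub⟩ := aux_finite17 F1 F2
        (fun A hA B hB => ⟨A ∩ B, ⟨hinter _ hA.1 _ hB.1,
          fun a ha b hab => ⟨hA.2.1 a ha.1 b hab, hB.2.1 a ha.2 b hab⟩,
          fun t ht => ⟨hA.2.2 t ht, hB.2.2 t ht⟩⟩, Set.Subset.rfl⟩)
        (fun A hA B hB => ⟨A ∩ B, ⟨hinter _ hA.1 _ hB.1,
          fun t ht => ⟨hA.2 t ht, hB.2 t ht⟩⟩, Set.Subset.rfl⟩)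
        ⟨huniv, fun _ _ _ _ => trivial, fun _ _ => trivial⟩
        ⟨huniv, fun _ _ => trivial⟩ G hGfin hGsub
      obtain ⟨u, hu⟩ := key A hA B hB
      exact ⟨u, hsub hu⟩
    obtain ⟨u, hu⟩ := hcompact (F1 ∪ F2)
      (by rintro A (hA | hA) <;> exact hA.1) hfip
    refine ⟨u, ?_, ?_⟩
    · by_contra hc
      obtain ⟨A', hA', huA', hzn⟩ := htight z u hc
      have hmem : A'ᶜ ∈ F2 :=
        ⟨hcompl _ hA', fun t ht hmem => hzn ⟨t, hmem, ht⟩⟩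
      exact hu A'ᶜ (Set.mem_union_right _ hmem) huA'
    · by_contra hc
      obtain ⟨A', hA', huA', hwn⟩ := htight w u hc
      have hmem : {s : W | ∀ t, R s t → t ∈ A'ᶜ} ∈ F1 := by
        refine ⟨hbox _ (hcompl _ hA'), ?_, ?_⟩
        · intro a ha b hab t hbt
          exact ha t (htrans a b t hab hbt)
        · intro t hwt s hts hsA'
          exact hwn ⟨s, hsA', htrans w t s hwt hts⟩
      have := hu _ (Set.mem_union_left _ hmem)
      exact this u (hrefl u) huA'
  -- x and y have a common successor
  have hE : ∃ u, R x u ∧ R y u := by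
    by_contra hnE
    push_neg at hnE
    set Sx : Set (Set W) :=
      {C | C ∈ P ∧ (∀ a ∈ C, ∀ b, R a b → b ∈ C) ∧ ∀ t, R x t → t ∈ C} with hSxdef
    set Sy : Set (Set W) :=
      {C | C ∈ P ∧ (∀ a ∈ C, ∀ b, R a b → b ∈ C) ∧ ∀ t, R y t → t ∈ C} with hSydef
    set F1 : Set (Set W) := {D | ∃ C ∈ Sx, D = {w : W | ∃ v ∈ C, R w v}} with hF1def
    set F2 : Set (Set W) := {D | ∃ C ∈ Sy, D = {w : W | ∃ v ∈ C, R w v}} with hF2def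
    have hFsub : F1 ∪ F2 ⊆ P := by
      rintro D (⟨C, hC, rfl⟩ | ⟨C, hC, rfl⟩) <;> exact hRinv C hC.1
    have hdiaUniv : {w : W | ∃ v ∈ (univ : Set W), R w v} = univ := by
      ext w; simp only [Set.mem_univ, iff_true, Set.mem_setOf_eq]
      exact ⟨w, trivial, hrefl w⟩
    have hemptyInt : ⋂₀ (F1 ∪ F2) = ∅ := by
      ext z
      simp only [Set.mem_empty_iff_false, iff_false]
      intro hz
      have h1 : ∃ u, R z u ∧ R x u := by
        refine seeclass z x (fun C hCP hCup hCsup => ?_)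
        exact hz _ (Set.mem_union_left _ ⟨C, ⟨hCP, hCup, hCsup⟩, rfl⟩)
      have h2 : ∃ u, R z u ∧ R y u := by
        refine seeclass z y (fun C hCP hCup hCsup => ?_)
        exact hz _ (Set.mem_union_right _ ⟨C, ⟨hCP, hCup, hCsup⟩, rfl⟩)
      obtain ⟨u1, hzu1, hxu1⟩ := h1
      obtain ⟨u2, hzu2, hyu2⟩ := h2
      obtain ⟨t, ht1, ht2⟩ := directed z u1 u2 hzu1 hzu2
      exact hnE t (htrans x u1 t hxu1 ht1) (htrans y u2 t hyu2 ht2)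
    have hne : ¬ (⋂₀ (F1 ∪ F2)).Nonempty := by
      rw [hemptyInt]; simp
    have hGex : ¬ ∀ G ⊆ F1 ∪ F2, G.Finite → (⋂₀ G).Nonempty :=
      fun h => hne (hcompact _ hFsub h)
    push_neg at hGex
    obtain ⟨G, hGsub, hGfin, hGne⟩ := hGex
    obtain ⟨A, hA, B, hB, hsub⟩ := aux_finite17 F1 F2
      (by
        rintro A ⟨C1, hC1, rfl⟩ B ⟨C2, hC2, rfl⟩
        refine ⟨{w : W | ∃ v ∈ C1 ∩ C2, R w v}, ⟨C1 ∩ C2,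
          ⟨hinter _ hC1.1 _ hC2.1,
            fun a ha b hab => ⟨hC1.2.1 a ha.1 b hab, hC2.2.1 a ha.2 b hab⟩,
            fun t ht => ⟨hC1.2.2 t ht, hC2.2.2 t ht⟩⟩, rfl⟩, ?_⟩
        rintro w ⟨v, ⟨hv1, hv2⟩, hwv⟩
        exact ⟨⟨v, hv1, hwv⟩, ⟨v, hv2, hwv⟩⟩)
      (by
        rintro A ⟨C1, hC1, rfl⟩ B ⟨C2, hC2, rfl⟩
        refine ⟨{w : W | ∃ v ∈ C1 ∩ C2, R w v}, ⟨C1 ∩ C2,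
          ⟨hinter _ hC1.1 _ hC2.1,
            fun a ha b hab => ⟨hC1.2.1 a ha.1 b hab, hC2.2.1 a ha.2 b hab⟩,
            fun t ht => ⟨hC1.2.2 t ht, hC2.2.2 t ht⟩⟩, rfl⟩, ?_⟩
        rintro w ⟨v, ⟨hv1, hv2⟩, hwv⟩
        exact ⟨⟨v, hv1, hwv⟩, ⟨v, hv2, hwv⟩⟩)
      ⟨univ, ⟨huniv, fun _ _ _ _ => trivial, fun _ _ => trivial⟩, hdiaUniv.symm⟩
      ⟨univ, ⟨huniv, fun _ _ _ _ => trivial, fun _ _ => trivial⟩, hdiaUniv.symm⟩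
      G hGfin hGsub
    obtain ⟨C, hC, rfl⟩ := hA
    obtain ⟨C', hC', rfl⟩ := hB
    -- ◇C is a nonempty admissible upset and downset, hence all of W
    have hxC : x ∈ {w : W | ∃ v ∈ C, R w v} :=
      ⟨x, hC.2.2 x (hrefl x), hrefl x⟩
    have hup : ∀ w ∈ {w : W | ∃ v ∈ C, R w v}, ∀ b, R w b →
        b ∈ {w : W | ∃ v ∈ C, R w v} := by
      rintro a ⟨v, hvC, hav⟩ b hab
      obtain ⟨t, hvt, hbt⟩ := directed a v b hav hab
      exact ⟨t, hC.2.1 v hvC t hvt, hbt⟩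
    have hdown : ∀ v ∈ {w : W | ∃ v ∈ C, R w v}, ∀ w, R w v →
        w ∈ {w : W | ∃ v ∈ C, R w v} := by
      rintro a ⟨v, hvC, hav⟩ b hba
      exact ⟨v, hvC, htrans b a v hba hav⟩
    rcases hconn _ (hRinv C hC.1) hup hdown with hcase | hcase
    · rw [hcase] at hxC
      exact hxC
    · have hyC : y ∈ {w : W | ∃ v ∈ C, R w v} := by rw [hcase]; trivial
      have hyC' : y ∈ {w : W | ∃ v ∈ C', R w v} :=
        ⟨y, hC'.2.2 y (hrefl y), hrefl y⟩
      have hmem := hsub ⟨hyC, hyC'⟩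
      rw [hGne] at hmem
      exact hmem
  obtain ⟨u, hxu, hyu⟩ := hE
  exact hy x (htrans y u x hyu (hx u hxu))
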